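/- arXiv:2509.10265 — 8 statements merged into one kernel-verified Lean document; each statement's English description precedes it below -/
import Mathlib

section
/- For every κ with 0 ≤ κ ≤ 1 and every real λ, one has cosh(πλ) · |Γ(1 + κ + iλ)|² ≥ 1/4, where Γ is the complex Gamma function. -/
open Real Complex Filter Finset Topology

/-- `sinh t ≤ t * cosh t` for `t ≥ 0`. -/
lemma aux_sinh_le_mul_cosh (t : ℝ) (ht : 0 ≤ t) : Real.sinh t ≤ t * Real.cosh t := by
  have hd : ∀ x : ℝ, HasDerivAt (fun s : ℝ => s * Real.cosh s - Real.sinh s)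
      (x * Real.sinh x) x := by
    intro x
    have h1 := ((hasDerivAt_id x).mul (Real.hasDerivAt_cosh x)).sub (Real.hasDerivAt_sinh x)
    convert h1 using 1
    · rfl
    · rfl
    · rfl
    · simp [id_eq]
  have hmono : MonotoneOn (fun s : ℝ => s * Real.cosh s - Real.sinh s) (Set.Ici 0) := by
    apply monotoneOn_of_deriv_nonneg (convex_Ici 0)
    · exact fun x _ => ((hd x).sub_const 0).continuousAt.continuousWithinAt |>.congr
        (fun y _ => by ring) (by ring)
    · exact fun x _ => ((hd x).differentiableAt).differentiableWithinAt
    · intro x hx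
      rw [(hd x).deriv]
      rw [interior_Ici, Set.mem_Ioi] at hx
      exact mul_nonneg hx.le (Real.sinh_nonneg_iff.mpr hx.le)
  have := hmono (Set.self_mem_Ici) (Set.mem_Ici.mpr ht) ht
  simp at this
  linarith

/-- Partial Euler products for sinh are bounded by sinh. -/
lemma aux_prod_le (y : ℝ) (hy : 0 < y) (n : ℕ) :
    π * y * ∏ j ∈ Finset.range n, (1 + y ^ 2 / ((j : ℝ) + 1) ^ 2) ≤ Real.sinh (π * y) := by
  have hmono : Monotone (fun n : ℕ => π * y * ∏ j ∈ Finset.range n, (1 + y ^ 2 / ((j : ℝ) + 1) ^ 2)) := by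
    apply monotone_nat_of_le_succ
    intro n
    rw [Finset.prod_range_succ, ← mul_assoc]
    have hP : 0 ≤ π * y * ∏ j ∈ Finset.range n, (1 + y ^ 2 / ((j : ℝ) + 1) ^ 2) := by
      positivity
    nlinarith [sq_nonneg y, sq_nonneg ((n:ℝ)+1), div_nonneg (sq_nonneg y) (sq_nonneg ((n:ℝ)+1))]
  have htend : Tendsto (fun n : ℕ => π * y * ∏ j ∈ Finset.range n, (1 + y ^ 2 / ((j : ℝ) + 1) ^ 2))
      atTop (𝓝 (Real.sinh (π * y))) := by
    have h := Complex.tendsto_euler_sin_prod (↑y * I)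
    have heq : (fun n : ℕ => ↑π * (↑y * I) * ∏ j ∈ Finset.range n, (1 - (↑y * I) ^ 2 / ((j : ℂ) + 1) ^ 2))
        = fun n : ℕ => (↑(π * y * ∏ j ∈ Finset.range n, (1 + y ^ 2 / ((j : ℝ) + 1) ^ 2)) : ℂ) * I := by
      funext n
      rw [show ((y:ℂ) * I) ^ 2 = -((y:ℂ) ^ 2) by rw [mul_pow, Complex.I_sq]; ring]
      simp only [neg_div, sub_neg_eq_add]
      push_cast
      ring
    rw [heq] at h
    have hsin : Complex.sin (↑π * (↑y * I)) = (↑(Real.sinh (π * y)) : ℂ) * I := by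
      rw [← mul_assoc, ← Complex.ofReal_mul, Complex.sin_mul_I, Complex.ofReal_sinh]
    rw [hsin] at h
    have h2 := (Complex.continuous_im.tendsto _).comp h
    simpa only [Function.comp_def, Complex.mul_I_im, Complex.ofReal_re] using h2
  exact hmono.ge_of_tendsto htend n

/-- abs² of the complex GammaSeq at `x + y i`. -/
lemma aux_gammaSeq_abs_sq (x y : ℝ) (n : ℕ) (hn : 0 < n) :
    ‖Complex.GammaSeq (↑x + ↑y * I) n‖ ^ 2
      = ((n : ℝ) ^ x * (Nat.factorial n : ℝ)) ^ 2 / ∏ j ∈ Finset.range (n + 1), ((x + (j : ℝ)) ^ 2 + y ^ 2) := by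
  rw [Complex.sq_norm, Complex.GammaSeq, map_div₀, map_mul, map_prod]
  congr 1
  · rw [mul_pow, ← Complex.sq_norm, ← Complex.sq_norm]
    rw [show ((n : ℕ) : ℂ) = ((n : ℝ) : ℂ) by norm_cast,
      Complex.norm_cpow_eq_rpow_re_of_pos (by exact_mod_cast hn)]
    simp [Complex.norm_natCast]
  · refine Finset.prod_congr rfl fun j _ => ?_
    rw [Complex.normSq_apply]
    simp
    ring

/-- Lower bound for `|Γ(x+iy)|²` when `x ≥ 1`, `y > 0`. -/
lemma aux_gamma_sq_lower (x y : ℝ) (hx : 1 ≤ x) (hy : 0 < y) :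
    Real.Gamma x ^ 2 * (π * y)
      ≤ ‖Complex.Gamma (↑x + ↑y * I)‖ ^ 2 * Real.sinh (π * y) := by
  have hx0 : (0:ℝ) < x := lt_of_lt_of_le one_pos hx
  have key : ∀ n : ℕ, 1 ≤ n →
      ‖Complex.GammaSeq (↑x + ↑(0:ℝ) * I) n‖ ^ 2 * (π * y)
        ≤ ‖Complex.GammaSeq (↑x + ↑y * I) n‖ ^ 2 * Real.sinh (π * y) := by
    intro n hn
    rw [aux_gammaSeq_abs_sq x 0 n hn, aux_gammaSeq_abs_sq x y n hn]
    set A := ((n : ℝ) ^ x * (Nat.factorial n : ℝ)) ^ 2 with hA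
    have hApos : 0 < A := by
      have : (0:ℝ) < (Nat.factorial n : ℝ) := by exact_mod_cast Nat.factorial_pos n
      positivity
    have hfac : ∀ j : ℕ, (0:ℝ) < (x + (j:ℝ)) ^ 2 + 0 ^ 2 := by
      intro j
      have : (0:ℝ) < x + (j:ℝ) := by positivity
      positivity
    have hP : (0:ℝ) < ∏ j ∈ Finset.range (n+1), ((x + (j:ℝ)) ^ 2 + 0 ^ 2) :=
      Finset.prod_pos fun j _ => hfac j
    have hQ : (0:ℝ) < ∏ j ∈ Finset.range (n+1), ((x + (j:ℝ)) ^ 2 + y ^ 2) := by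
      apply Finset.prod_pos
      intro j _
      have : (0:ℝ) < x + (j:ℝ) := by positivity
      positivity
    rw [div_mul_eq_mul_div, div_mul_eq_mul_div, div_le_div_iff₀ hP hQ]
    have hQle : ∏ j ∈ Finset.range (n+1), ((x + (j:ℝ)) ^ 2 + y ^ 2)
        ≤ (∏ j ∈ Finset.range (n+1), ((x + (j:ℝ)) ^ 2 + 0 ^ 2))
          * ∏ j ∈ Finset.range (n+1), (1 + y ^ 2 / ((j:ℝ) + 1) ^ 2) := by
      rw [← Finset.prod_mul_distrib]
      apply Finset.prod_le_prod
      · intro j _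
        have : (0:ℝ) < x + (j:ℝ) := by positivity
        positivity
      · intro j _
        have hj1 : ((j:ℝ) + 1) ^ 2 ≤ (x + (j:ℝ)) ^ 2 := by
          have hj0 : (0:ℝ) ≤ (j:ℝ) := Nat.cast_nonneg j
          nlinarith
        have hrw : y ^ 2 = ((j:ℝ) + 1) ^ 2 * (y ^ 2 / ((j:ℝ) + 1) ^ 2) := by
          field_simp
        calc (x + (j:ℝ)) ^ 2 + y ^ 2
            = (x + (j:ℝ)) ^ 2 + ((j:ℝ) + 1) ^ 2 * (y ^ 2 / ((j:ℝ) + 1) ^ 2) := by rw [← hrw]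
          _ ≤ (x + (j:ℝ)) ^ 2 + (x + (j:ℝ)) ^ 2 * (y ^ 2 / ((j:ℝ) + 1) ^ 2) := by
              gcongr
          _ = ((x + (j:ℝ)) ^ 2 + 0 ^ 2) * (1 + y ^ 2 / ((j:ℝ) + 1) ^ 2) := by ring
    have hprod := aux_prod_le y hy (n + 1)
    calc A * (π * y) * ∏ j ∈ Finset.range (n+1), ((x + (j:ℝ)) ^ 2 + y ^ 2)
        ≤ A * (π * y) * ((∏ j ∈ Finset.range (n+1), ((x + (j:ℝ)) ^ 2 + 0 ^ 2))
            * ∏ j ∈ Finset.range (n+1), (1 + y ^ 2 / ((j:ℝ) + 1) ^ 2)) := by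
          have : (0:ℝ) ≤ A * (π * y) := by positivity
          exact mul_le_mul_of_nonneg_left hQle this
      _ = (A * ∏ j ∈ Finset.range (n+1), ((x + (j:ℝ)) ^ 2 + 0 ^ 2))
            * (π * y * ∏ j ∈ Finset.range (n+1), (1 + y ^ 2 / ((j:ℝ) + 1) ^ 2)) := by ring
      _ ≤ (A * ∏ j ∈ Finset.range (n+1), ((x + (j:ℝ)) ^ 2 + 0 ^ 2)) * Real.sinh (π * y) := by
          have : (0:ℝ) ≤ A * ∏ j ∈ Finset.range (n+1), ((x + (j:ℝ)) ^ 2 + 0 ^ 2) :=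
            le_of_lt (mul_pos hApos hP)
          exact mul_le_mul_of_nonneg_left hprod this
      _ = A * Real.sinh (π * y) * ∏ j ∈ Finset.range (n+1), ((x + (j:ℝ)) ^ 2 + 0 ^ 2) := by ring
  have t1 : Tendsto (fun n : ℕ => ‖Complex.GammaSeq (↑x + ↑(0:ℝ) * I) n‖ ^ 2 * (π * y))
      atTop (𝓝 (‖Complex.Gamma (↑x + ↑(0:ℝ) * I)‖ ^ 2 * (π * y))) :=
    ((((continuous_norm.tendsto _).comp
      (Complex.GammaSeq_tendsto_Gamma _)).pow 2).mul_const _)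
  have t2 : Tendsto (fun n : ℕ =>
        ‖Complex.GammaSeq (↑x + ↑y * I) n‖ ^ 2 * Real.sinh (π * y))
      atTop (𝓝 (‖Complex.Gamma (↑x + ↑y * I)‖ ^ 2 * Real.sinh (π * y))) :=
    ((((continuous_norm.tendsto _).comp
      (Complex.GammaSeq_tendsto_Gamma _)).pow 2).mul_const _)
  have hle := le_of_tendsto_of_tendsto t1 t2 (eventually_atTop.2 ⟨1, key⟩)
  have hsimp : ‖Complex.Gamma (↑x + ↑(0:ℝ) * I)‖ = Real.Gamma x := by
    rw [Complex.ofReal_zero, zero_mul, add_zero, Complex.Gamma_ofReal, Complex.norm_real, Real.norm_eq_abs,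
      abs_of_pos (Real.Gamma_pos_of_pos hx0)]
  rwa [hsimp] at hle

/-- `Γ(1+κ) ≥ 1/2` for `0 ≤ κ ≤ 1`. -/
lemma aux_gamma_ge (κ : ℝ) (hκ0 : 0 ≤ κ) (hκ1 : κ ≤ 1) : (1:ℝ)/2 ≤ Real.Gamma (1 + κ) := by
  have hc := Real.convexOn_log_Gamma
  have h1mem : (1:ℝ) ∈ Set.Ioi (0:ℝ) := by norm_num
  have h2mem : (2:ℝ) ∈ Set.Ioi (0:ℝ) := by norm_num
  have hA := hc.2 h1mem h2mem hκ0 (by linarith : (0:ℝ) ≤ 1 - κ) (by ring)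
  have e1 : κ • (1:ℝ) + (1 - κ) • (2:ℝ) = 2 - κ := by simp [smul_eq_mul]; ring
  rw [e1] at hA
  simp only [Function.comp_apply, smul_eq_mul, Real.Gamma_one, Real.Gamma_two,
    Real.log_one, mul_zero, add_zero] at hA
  have hamem : (1 + κ) ∈ Set.Ioi (0:ℝ) := by simp; linarith
  have hbmem : (2 - κ) ∈ Set.Ioi (0:ℝ) := by simp; linarith
  have hB := hc.2 hamem hbmem (by norm_num : (0:ℝ) ≤ 1/2) (by norm_num : (0:ℝ) ≤ 1/2)
    (by norm_num)
  have e2 : (1/2 : ℝ) • (1 + κ) + (1/2 : ℝ) • (2 - κ) = 3/2 := by simp [smul_eq_mul]; ring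
  rw [e2] at hB
  simp only [Function.comp_apply, smul_eq_mul] at hB
  -- Γ(3/2) = √π / 2
  have hg32 : Real.Gamma (3/2) = Real.sqrt π / 2 := by
    have : (3/2 : ℝ) = 1/2 + 1 := by norm_num
    rw [this, Real.Gamma_add_one (by norm_num), Real.Gamma_one_half_eq]
    ring
  have hgpos : 0 < Real.Gamma (1 + κ) := Real.Gamma_pos_of_pos (by linarith)
  have hlog : Real.log (Real.Gamma (3/2)) ≤ 1/2 * Real.log (Real.Gamma (1 + κ)) := by linarith
  have hsq : Real.Gamma (3/2) ^ 2 ≤ Real.Gamma (1 + κ) := by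
    have h32pos : 0 < Real.Gamma (3/2) := Real.Gamma_pos_of_pos (by norm_num)
    rw [← Real.log_le_log_iff (by positivity) hgpos, Real.log_pow]
    push_cast
    linarith
  rw [hg32, div_pow, Real.sq_sqrt Real.pi_pos.le] at hsq
  nlinarith [Real.pi_gt_three]

/-- Main bound for nonnegative `l`. -/
lemma aux_main_nonneg (κ l : ℝ) (hκ0 : 0 ≤ κ) (hκ1 : κ ≤ 1) (hl : 0 ≤ l) :
    (1 : ℝ) / 4 ≤ Real.cosh (π * l) *
      (‖Complex.Gamma (↑(1 + κ) + ↑l * I)‖) ^ 2 := by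
  have hg := aux_gamma_ge κ hκ0 hκ1
  rcases eq_or_lt_of_le hl with h0 | hpos
  · rw [← h0, Complex.ofReal_zero, zero_mul, add_zero, mul_zero, Real.cosh_zero,
      Complex.Gamma_ofReal, Complex.norm_real, Real.norm_eq_abs,
      abs_of_pos (Real.Gamma_pos_of_pos (by linarith : (0:ℝ) < 1 + κ))]
    nlinarith
  · have key := aux_gamma_sq_lower (1 + κ) l (by linarith) hpos
    have hsl := aux_sinh_le_mul_cosh (π * l) (by positivity)
    have hs : 0 < Real.sinh (π * l) := Real.sinh_pos_iff.mpr (by positivity)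
    have hG : (0:ℝ) ≤ ‖Complex.Gamma (↑(1 + κ) + ↑l * I)‖ ^ 2 := by positivity
    have hpl : (0:ℝ) < π * l := by positivity
    have hc2 : (1/4:ℝ) ≤ Real.Gamma (1 + κ) ^ 2 := by nlinarith
    have step : (1/4 : ℝ) * (π * l) ≤ (Real.cosh (π * l) *
        ‖Complex.Gamma (↑(1 + κ) + ↑l * I)‖ ^ 2) * (π * l) := by
      calc (1/4 : ℝ) * (π * l) ≤ Real.Gamma (1 + κ) ^ 2 * (π * l) :=
            mul_le_mul_of_nonneg_right hc2 hpl.le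
        _ ≤ ‖Complex.Gamma (↑(1 + κ) + ↑l * I)‖ ^ 2 * Real.sinh (π * l) := key
        _ ≤ ‖Complex.Gamma (↑(1 + κ) + ↑l * I)‖ ^ 2 * (π * l * Real.cosh (π * l)) :=
            mul_le_mul_of_nonneg_left hsl hG
        _ = (Real.cosh (π * l) * ‖Complex.Gamma (↑(1 + κ) + ↑l * I)‖ ^ 2) * (π * l) := by
            ring
    exact le_of_mul_le_mul_right step hpl

/-- For every `κ` with `0 ≤ κ ≤ 1` and every real `λ`,
`cosh(πλ) · |Γ(1 + κ + iλ)|² ≥ 1/4`. -/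
theorem stmt_2 (κ l : ℝ) (hκ0 : 0 ≤ κ) (hκ1 : κ ≤ 1) :
    (1 : ℝ) / 4 ≤ Real.cosh (π * l) *
      (‖Complex.Gamma (1 + (κ : ℂ) + Complex.I * (l : ℂ))‖) ^ 2 := by
  have he : 1 + (κ : ℂ) + Complex.I * (l : ℂ) = ↑(1 + κ) + ↑l * I := by push_cast; ring
  rw [he]
  rcases le_total 0 l with h | h
  · exact aux_main_nonneg κ l hκ0 hκ1 h
  · have h2 := aux_main_nonneg κ (-l) hκ0 hκ1 (by linarith)
    have hconj : (↑(1 + κ) + ↑(-l) * I : ℂ) = starRingEnd ℂ (↑(1 + κ) + ↑l * I) := by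
      rw [map_add, map_mul, Complex.conj_ofReal, Complex.conj_ofReal, Complex.conj_I]
      push_cast
      ring
    rw [hconj, Complex.Gamma_conj, Complex.norm_conj] at h2
    rw [show π * l = -(π * (-l)) by ring, Real.cosh_neg]
    exact h2
end

section
/- For every H with 0 < H < 1 and every t > 0, one has cosh(Ht) − (1/2)·(2 sinh(t/2))^{2H} = (1/2) e^{−Ht} + Σ_{n=1}^{∞} (H/n!) · (∏_{j=1}^{n−1} (j − 2H)) · e^{−(n−H)t}, where the series on the right converges absolutely (for n = 1 the empty product equals 1). -/
open Real Finset

noncomputable def bc (p : ℝ) (n : ℕ) : ℝ := (∏ j ∈ Finset.range n, ((j:ℝ) - p)) / (Nat.factorial n : ℝ)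

lemma bc_zero (p : ℝ) : bc p 0 = 1 := by simp [bc]

lemma bc_rec (p : ℝ) (n : ℕ) : ((n:ℝ)+1) * bc p (n+1) = ((n:ℝ) - p) * bc p n := by
  have h : (Nat.factorial n : ℝ) ≠ 0 := by positivity
  simp only [bc, Finset.prod_range_succ, Nat.factorial_succ, Nat.cast_mul, Nat.cast_add,
    Nat.cast_one]
  field_simp

lemma bc_abs_le (p : ℝ) (hp0 : 0 < p) (hp2 : p < 2) (n : ℕ) : |bc p n| ≤ 2 := by
  induction n with
  | zero => rw [bc_zero]; norm_num
  | succ n ih =>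
    have hn1 : (0:ℝ) < (n:ℝ) + 1 := by positivity
    have h : bc p (n+1) = ((n:ℝ) - p) / ((n:ℝ)+1) * bc p n := by
      field_simp
      linarith [bc_rec p n]
    rw [h, abs_mul, abs_div]
    cases n with
    | zero =>
      simp only [Nat.cast_zero, bc_zero, abs_one, mul_one, zero_sub, abs_neg]
      rw [abs_of_pos hp0]
      norm_num
      linarith
    | succ m =>
      have hpos : (0:ℝ) < |((m+1:ℕ):ℝ) + 1| := by
        rw [abs_of_pos hn1]; exact hn1
      have hq : |((m+1:ℕ):ℝ) - p| / |((m+1:ℕ):ℝ) + 1| ≤ 1 := by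
        rw [div_le_one hpos, abs_of_pos hn1, abs_le]
        push_cast
        constructor <;> nlinarith [Nat.cast_nonneg (α := ℝ) m]
      calc |((m+1:ℕ):ℝ) - p| / |((m+1:ℕ):ℝ) + 1| * |bc p (m+1)|
          ≤ 1 * |bc p (m+1)| := mul_le_mul_of_nonneg_right hq (abs_nonneg _)
        _ ≤ 2 := by rw [one_mul]; exact ih

lemma bc_summable {p : ℝ} (hp0 : 0 < p) (hp2 : p < 2) {y : ℝ} (hy : |y| < 1) :
    Summable (fun n : ℕ => ‖bc p n * y ^ n‖) := by
  apply Summable.of_nonneg_of_le (fun n => norm_nonneg _) (fun n => ?_)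
    (((summable_geometric_of_lt_one (abs_nonneg y) hy).mul_left 2))
  rw [norm_mul, norm_pow, Real.norm_eq_abs, Real.norm_eq_abs]
  exact mul_le_mul_of_nonneg_right (bc_abs_le p hp0 hp2 n) (by positivity)

lemma bc_tsum {p x : ℝ} (hp0 : 0 < p) (hp2 : p < 2) (hx0 : 0 < x) (hx1 : x < 1) :
    ∑' n : ℕ, bc p n * x ^ n = (1 - x) ^ p := by
  set r : ℝ := (1 + x) / 2 with hr
  have hr0 : 0 < r := by positivity
  have hxr : x < r := by rw [hr]; linarith
  have hr1 : r < 1 := by rw [hr]; linarith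
  set s : Set ℝ := Set.Ioo (-r) r with hs
  have hmem : ∀ y ∈ s, |y| < r := fun y hy => abs_lt.mpr ⟨hy.1, hy.2⟩
  have hy1 : ∀ y ∈ s, |y| < 1 := fun y hy => lt_trans (hmem y hy) hr1
  -- summable bound on derivatives
  set u : ℕ → ℝ := fun n => 2 * ((n:ℝ) * r ^ (n - 1)) with hu_def
  have hu : Summable u := by
    have h1 : Summable (fun n : ℕ => (n:ℝ) * r ^ n) := by
      simpa using summable_pow_mul_geometric_of_norm_lt_one 1
        (r := r) (by rw [Real.norm_eq_abs, abs_of_pos hr0]; exact hr1)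
    have h2 : (fun n : ℕ => (n:ℝ) * r ^ (n-1)) = fun n : ℕ => (1/r) * ((n:ℝ) * r ^ n) := by
      funext n
      cases n with
      | zero => simp
      | succ m =>
        rw [Nat.add_sub_cancel, pow_succ]
        field_simp
    rw [hu_def]
    refine Summable.mul_left 2 ?_
    rw [h2]
    exact h1.mul_left _
  set g : ℕ → ℝ → ℝ := fun n z => bc p n * z ^ n with hg_def
  set g' : ℕ → ℝ → ℝ := fun n z => bc p n * ((n:ℝ) * z ^ (n-1)) with hg'_def
  have hg : ∀ n, ∀ y ∈ s, HasDerivAt (g n) (g' n y) y :=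
    fun n y _ => (hasDerivAt_pow n y).const_mul (bc p n)
  have hg' : ∀ n, ∀ y ∈ s, ‖g' n y‖ ≤ u n := by
    intro n y hy
    rw [hg'_def]
    simp only [norm_mul, Real.norm_eq_abs, norm_pow, Nat.abs_cast]
    have h1 : |y| ^ (n-1) ≤ r ^ (n-1) := pow_le_pow_left₀ (abs_nonneg y) (hmem y hy).le _
    have h2 := bc_abs_le p hp0 hp2 n
    calc |bc p n| * ((n:ℝ) * |y| ^ (n-1)) ≤ 2 * ((n:ℝ) * r ^ (n-1)) := by
          apply mul_le_mul h2 _ (by positivity) (by norm_num)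
          exact mul_le_mul_of_nonneg_left h1 (Nat.cast_nonneg n)
      _ = u n := rfl
  have h0s : (0:ℝ) ∈ s := ⟨by linarith, hr0⟩
  have hg0 : Summable (fun n => g n 0) := by
    refine Summable.of_norm ?_
    simpa [hg_def] using bc_summable hp0 hp2 (y := 0) (by norm_num)
  have hF : ∀ y ∈ s, HasDerivAt (fun z => ∑' n, g n z) (∑' n, g' n y) y := fun y hy =>
    hasDerivAt_tsum_of_isPreconnected hu isOpen_Ioo isPreconnected_Ioo hg hg' h0s hg0 hy
  -- summabilities at a point y ∈ s
  have hSg : ∀ y ∈ s, Summable (fun n => g n y) := fun y hy =>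
    (bc_summable hp0 hp2 (hy1 y hy)).of_norm
  have hSg' : ∀ y ∈ s, Summable (fun n => g' n y) := fun y hy =>
    (hu.of_norm_bounded_eventually_nat (Filter.Eventually.of_forall fun n => hg' n y hy))
  have hSA : ∀ y ∈ s, Summable (fun n : ℕ => (n:ℝ) * bc p n * y ^ n) := by
    intro y hy
    have h1 : Summable (fun n : ℕ => 2 * ((n:ℝ) * |y| ^ n)) := by
      refine Summable.mul_left _ ?_
      simpa using summable_pow_mul_geometric_of_norm_lt_one 1
        (r := |y|) (by rw [Real.norm_eq_abs, abs_abs]; exact hy1 y hy)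
    refine Summable.of_norm (Summable.of_nonneg_of_le (fun n => norm_nonneg _) (fun n => ?_) h1)
    simp only [norm_mul, Real.norm_eq_abs, Nat.abs_cast, norm_pow]
    have := bc_abs_le p hp0 hp2 n
    calc (n:ℝ) * |bc p n| * |y| ^ n ≤ (n:ℝ) * 2 * |y| ^ n := by
          apply mul_le_mul_of_nonneg_right _ (by positivity)
          exact mul_le_mul_of_nonneg_left this (Nat.cast_nonneg n)
      _ = 2 * ((n:ℝ) * |y| ^ n) := by ring
  -- the ODE
  have hODE : ∀ y ∈ s, (1 - y) * (∑' n, g' n y) = -p * ∑' n, g n y := by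
    intro y hy
    have hS' := hSg' y hy
    have hS := hSg y hy
    have hA := hSA y hy
    have hshift : ∑' n, g' n y = ∑' m : ℕ, (((m:ℝ) - p) * bc p m) * y ^ m := by
      rw [Summable.tsum_eq_zero_add hS']
      have h0 : g' 0 y = 0 := by simp [hg'_def]
      rw [h0, zero_add]
      apply tsum_congr
      intro m
      have := bc_rec p m
      simp only [hg'_def, Nat.add_sub_cancel]
      push_cast
      linear_combination y ^ m * this
    have hyT : y * (∑' n, g' n y) = ∑' n : ℕ, (n:ℝ) * bc p n * y ^ n := by
      rw [← tsum_mul_left]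
      apply tsum_congr
      intro n
      cases n with
      | zero => simp [hg'_def]
      | succ m =>
        simp only [hg'_def, Nat.add_sub_cancel]
        rw [pow_succ]
        ring
    have hsplit : ∑' m : ℕ, (((m:ℝ) - p) * bc p m) * y ^ m
        = (∑' n : ℕ, (n:ℝ) * bc p n * y ^ n) - p * ∑' n, g n y := by
      rw [← tsum_mul_left, ← Summable.tsum_sub hA (hS.mul_left p)]
      apply tsum_congr
      intro n
      simp only [hg_def]
      ring
    have : (1 - y) * (∑' n, g' n y) = (∑' n, g' n y) - y * (∑' n, g' n y) := by ring
    rw [this, hyT, hshift, hsplit]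
    ring
  -- F := f * (1-z)^(-p) has zero derivative on s
  have hFz : ∀ y ∈ s, HasDerivAt (fun z => (∑' n, g n z) * (1 - z) ^ (-p)) 0 y := by
    intro y hy
    have h1y : 0 < 1 - y := by have := hy.2; simp only [hs, Set.mem_Ioo] at hy; linarith
    have h1 : HasDerivAt (fun z : ℝ => 1 - z) (-1) y := (hasDerivAt_id y).const_sub 1
    have h2 : HasDerivAt (fun z : ℝ => (1 - z) ^ (-p)) (-1 * (-p) * (1 - y) ^ (-p - 1)) y :=
      h1.rpow_const (Or.inl (ne_of_gt h1y))
    have h3 := (hF y hy).mul h2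
    have key : (∑' n, g' n y) * (1 - y) ^ (-p)
        + (∑' n, g n y) * (-1 * (-p) * (1 - y) ^ (-p - 1)) = 0 := by
      have hpow : (1 - y) ^ (-p) = (1 - y) ^ (-p - 1) * (1 - y) := by
        rw [← Real.rpow_add_one (ne_of_gt h1y) (-p - 1)]
        ring_nf
      rw [hpow]
      linear_combination ((1 - y) ^ (-p - 1)) * (hODE y hy)
    rw [← key]
    exact h3
  -- MVT
  have hsub : Set.Icc (0:ℝ) x ⊆ s := by
    intro z hz
    exact ⟨by linarith [hz.1], by linarith [hz.2]⟩
  have hcont : ContinuousOn (fun z => (∑' n, g n z) * (1 - z) ^ (-p)) (Set.Icc 0 x) :=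
    fun z hz => ((hFz z (hsub hz)).continuousAt).continuousWithinAt
  obtain ⟨c, hc, hceq⟩ := exists_hasDerivAt_eq_slope
    (fun z => (∑' n, g n z) * (1 - z) ^ (-p)) (fun _ => (0:ℝ)) hx0 hcont
    (fun z hz => hFz z (hsub ⟨hz.1.le, hz.2.le⟩))
  have hsum0 : ∑' n, g n 0 = 1 := by
    rw [tsum_eq_single 0 (fun n hn => by simp [hg_def, zero_pow hn])]
    simp [hg_def, bc_zero]
  have hFx : (∑' n, g n x) * (1 - x) ^ (-p) = 1 := by
    have hx0' : x - 0 ≠ 0 := by simpa using ne_of_gt hx0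
    field_simp at hceq
    simp only [hsum0, sub_zero, Real.one_rpow, mul_one, zero_mul] at hceq
    linarith [hceq, hsum0]
  have h1x : 0 < 1 - x := by linarith
  have := congrArg (· * (1 - x) ^ p) hFx
  simp only [one_mul] at this
  rw [mul_assoc, ← Real.rpow_add h1x, neg_add_cancel, Real.rpow_zero, mul_one] at this
  simpa [hg_def] using this

/-- For `0 < H < 1` and `t > 0`,
`cosh(Ht) − (1/2)(2 sinh(t/2))^{2H}
  = (1/2) e^{−Ht} + Σ_{n≥1} (H/n!) (∏_{j=1}^{n−1} (j − 2H)) e^{−(n−H)t}`,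
with the series converging absolutely. (The summation index `n ≥ 1` is
represented by `n = m + 1` with `m : ℕ`.) -/
theorem stmt_5 (H t : ℝ) (hH0 : 0 < H) (hH1 : H < 1) (ht : 0 < t) :
    Summable (fun m : ℕ =>
      |(H / (Nat.factorial (m + 1) : ℝ)) *
        (∏ j ∈ Finset.range m, ((j : ℝ) + 1 - 2 * H)) *
        Real.exp (-(((m : ℝ) + 1) - H) * t)|) ∧
    Real.cosh (H * t) - (1 / 2) * (2 * Real.sinh (t / 2)) ^ (2 * H)
      = (1 / 2) * Real.exp (-(H * t)) +
        ∑' m : ℕ, (H / (Nat.factorial (m + 1) : ℝ)) *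
          (∏ j ∈ Finset.range m, ((j : ℝ) + 1 - 2 * H)) *
          Real.exp (-(((m : ℝ) + 1) - H) * t) := by
  set p : ℝ := 2 * H with hp
  have hp0 : 0 < p := by positivity
  have hp2 : p < 2 := by rw [hp]; linarith
  set x : ℝ := Real.exp (-t) with hx
  have hx0 : 0 < x := Real.exp_pos _
  have hx1 : x < 1 := by rw [hx, Real.exp_lt_one_iff]; linarith
  have hxabs : |x| < 1 := by rw [abs_of_pos hx0]; exact hx1
  -- term identity
  have hterm : ∀ m : ℕ, (H / (Nat.factorial (m + 1) : ℝ)) *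
      (∏ j ∈ Finset.range m, ((j : ℝ) + 1 - 2 * H)) *
      Real.exp (-(((m : ℝ) + 1) - H) * t)
      = (-(1/2) * Real.exp (H * t)) * (bc p (m+1) * x ^ (m+1)) := by
    intro m
    have hexp : Real.exp (-(((m : ℝ) + 1) - H) * t) = Real.exp (H * t) * x ^ (m+1) := by
      rw [hx, ← Real.exp_nat_mul, ← Real.exp_add]
      congr 1
      push_cast
      ring
    have hprod : ∏ j ∈ Finset.range (m+1), ((j:ℝ) - p)
        = (∏ j ∈ Finset.range m, ((j : ℝ) + 1 - 2 * H)) * ((0:ℝ) - p) := by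
      rw [Finset.prod_range_succ' (fun j => ((j:ℝ) - p)) m]
      push_cast
      rw [hp]
    have hfac : ((Nat.factorial (m+1) : ℝ)) ≠ 0 := by positivity
    rw [hexp]
    simp only [bc, hprod]
    field_simp
    ring
  -- summability
  have hbs := bc_summable hp0 hp2 hxabs
  have hbs' : Summable (fun m : ℕ => ‖bc p (m+1) * x ^ (m+1)‖) :=
    (summable_nat_add_iff 1).mpr hbs
  have hsummable : Summable (fun m : ℕ =>
      |(H / (Nat.factorial (m + 1) : ℝ)) *
        (∏ j ∈ Finset.range m, ((j : ℝ) + 1 - 2 * H)) *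
        Real.exp (-(((m : ℝ) + 1) - H) * t)|) := by
    apply Summable.congr ((hbs'.mul_left (|(-(1/2) * Real.exp (H * t))|)))
    intro m
    rw [Real.norm_eq_abs, ← abs_mul, hterm m]
  refine ⟨hsummable, ?_⟩
  -- the series value
  have hsum1 : Summable (fun n : ℕ => bc p n * x ^ n) := hbs.of_norm
  have hshift : ∑' m : ℕ, bc p (m+1) * x ^ (m+1) = (1 - x) ^ p - 1 := by
    have hkey := bc_tsum hp0 hp2 hx0 hx1
    rw [Summable.tsum_eq_zero_add hsum1] at hkey
    simp only [bc_zero, pow_zero, mul_one] at hkey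
    linarith
  have htsum : ∑' m : ℕ, (H / (Nat.factorial (m + 1) : ℝ)) *
      (∏ j ∈ Finset.range m, ((j : ℝ) + 1 - 2 * H)) *
      Real.exp (-(((m : ℝ) + 1) - H) * t)
      = (-(1/2) * Real.exp (H * t)) * ((1 - x) ^ p - 1) := by
    rw [tsum_congr hterm, tsum_mul_left, hshift]
  rw [htsum]
  -- sinh and rpow manipulation
  have hsinh : 2 * Real.sinh (t / 2) = Real.exp (t/2) * (1 - x) := by
    have e1 : Real.exp (t/2) * Real.exp (-t) = Real.exp (-(t/2)) := by
      rw [← Real.exp_add]; ring_nf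
    rw [Real.sinh_eq, hx, mul_sub, mul_one, e1]
    ring
  have hrpow : (2 * Real.sinh (t / 2)) ^ (2 * H) = Real.exp (H * t) * (1 - x) ^ p := by
    rw [hsinh, Real.mul_rpow (Real.exp_pos _).le (by linarith), ← Real.exp_mul, ← hp]
    congr 2
    ring
  rw [hrpow, Real.cosh_eq]
  ring
end

section
/- For every H with 0 < H ≤ 1/2, the function t ↦ cosh(Ht) − (1/2)·(2 sinh(t/2))^{2H} is convex on the interval (0, ∞). -/
open Real

private lemma aux_hasDerivAt_u (t : ℝ) :
    HasDerivAt (fun t : ℝ => 2 * Real.sinh (t / 2)) (Real.cosh (t / 2)) t := by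
  have h1 : HasDerivAt (fun t : ℝ => t / 2) (1 / 2) t := by
    simpa using (hasDerivAt_id t).div_const 2
  have h2 : HasDerivAt (fun t : ℝ => 2 * Real.sinh (t / 2))
      (2 * (Real.cosh (t / 2) * (1 / 2))) t :=
    by have := ((Real.hasDerivAt_sinh (t / 2)).comp t h1).const_mul (2 : ℝ); exact this
  convert h2 using 1
  ring

private lemma aux_hasDerivAt_c (t : ℝ) :
    HasDerivAt (fun t : ℝ => Real.cosh (t / 2)) (Real.sinh (t / 2) * (1 / 2)) t := by
  have h1 : HasDerivAt (fun t : ℝ => t / 2) (1 / 2) t := by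
    simpa using (hasDerivAt_id t).div_const 2
  exact (Real.hasDerivAt_cosh (t / 2)).comp t h1

private lemma aux_hasDerivAt_coshH (H t : ℝ) :
    HasDerivAt (fun t : ℝ => Real.cosh (H * t)) (Real.sinh (H * t) * H) t := by
  have h1 : HasDerivAt (fun t : ℝ => H * t) H t := by
    simpa using (hasDerivAt_id t).const_mul H
  exact (Real.hasDerivAt_cosh (H * t)).comp t h1

private lemma aux_sinh_pos {t : ℝ} (ht : 0 < t) : 0 < 2 * Real.sinh (t / 2) := by
  have : 0 < Real.sinh (t / 2) := Real.sinh_pos_iff.mpr (by linarith)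
  linarith

/-- first derivative -/
private lemma aux_hd1 (H : ℝ) {t : ℝ} (ht : 0 < t) :
    HasDerivAt (fun t : ℝ => Real.cosh (H * t) - (1 / 2) * (2 * Real.sinh (t / 2)) ^ (2 * H))
      (Real.sinh (H * t) * H -
        (1 / 2) * (Real.cosh (t / 2) * (2 * H) * (2 * Real.sinh (t / 2)) ^ (2 * H - 1))) t := by
  have hne : (2 * Real.sinh (t / 2)) ≠ 0 := (aux_sinh_pos ht).ne'
  have hp := ((aux_hasDerivAt_u t).rpow_const (p := 2 * H) (Or.inl hne)).const_mul (1 / 2 : ℝ)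
  exact (aux_hasDerivAt_coshH H t).sub hp

/-- second derivative -/
private lemma aux_hd2 (H : ℝ) {t : ℝ} (ht : 0 < t) :
    HasDerivAt (fun t : ℝ => Real.sinh (H * t) * H -
        (1 / 2) * (Real.cosh (t / 2) * (2 * H) * (2 * Real.sinh (t / 2)) ^ (2 * H - 1)))
      (Real.cosh (H * t) * H * H -
        (1 / 2) * ((Real.sinh (t / 2) * (1 / 2) * (2 * H)) * (2 * Real.sinh (t / 2)) ^ (2 * H - 1)
          + (Real.cosh (t / 2) * (2 * H)) *
            (Real.cosh (t / 2) * (2 * H - 1) * (2 * Real.sinh (t / 2)) ^ (2 * H - 1 - 1)))) t := by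
  have hne : (2 * Real.sinh (t / 2)) ≠ 0 := (aux_sinh_pos ht).ne'
  have h1 : HasDerivAt (fun t : ℝ => H * t) H t := by
    simpa using (hasDerivAt_id t).const_mul H
  have hA : HasDerivAt (fun t : ℝ => Real.sinh (H * t) * H) (Real.cosh (H * t) * H * H) t := by
    exact ((Real.hasDerivAt_sinh (H * t)).comp t h1).mul_const H
  have hq := (aux_hasDerivAt_u t).rpow_const (p := 2 * H - 1) (Or.inl hne)
  have hcm : HasDerivAt (fun t : ℝ => Real.cosh (t / 2) * (2 * H))
      (Real.sinh (t / 2) * (1 / 2) * (2 * H)) t := (aux_hasDerivAt_c t).mul_const (2 * H)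
  have hB := (hcm.mul hq).const_mul (1 / 2 : ℝ)
  exact hA.sub hB

/-- nonnegativity of the second derivative -/
private lemma aux_nonneg (H : ℝ) (hH0 : 0 < H) (hH : H ≤ 1 / 2) {t : ℝ} (ht : 0 < t) :
    0 ≤ Real.cosh (H * t) * H * H -
        (1 / 2) * ((Real.sinh (t / 2) * (1 / 2) * (2 * H)) * (2 * Real.sinh (t / 2)) ^ (2 * H - 1)
          + (Real.cosh (t / 2) * (2 * H)) *
            (Real.cosh (t / 2) * (2 * H - 1) * (2 * Real.sinh (t / 2)) ^ (2 * H - 1 - 1))) := by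
  set s := Real.sinh (t / 2) with hs
  set c := Real.cosh (t / 2) with hc
  have hs0 : 0 < s := Real.sinh_pos_iff.mpr (by linarith)
  have hu : 0 < 2 * s := by linarith
  set X := (2 * s) ^ (2 * H - 2) with hX
  have hXpos : 0 < X := Real.rpow_pos_of_pos hu _
  have hE1 : (2 * s) ^ (2 * H - 1) = X * (2 * s) := by
    rw [hX, show 2 * H - 1 = (2 * H - 2) + 1 by ring, Real.rpow_add hu, Real.rpow_one]
  have hE1' : (2 * s) ^ (2 * H - 1 - 1) = X := by
    rw [hX, show 2 * H - 1 - 1 = 2 * H - 2 by ring]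
  have hE2 : (2 * s) ^ (2 * H) = X * (2 * s) ^ (2 : ℝ) := by
    rw [hX, show 2 * H = (2 * H - 2) + 2 by ring, Real.rpow_add hu]
    ring_nf
  have hsq : (2 * s) ^ (2 : ℝ) = (2 * s) ^ (2 : ℕ) := by
    rw [← Real.rpow_natCast (2 * s) 2]; norm_num
  -- key bound : (2 s)^{2H} ≤ 2 cosh (H t)
  have hle : 2 * s ≤ Real.exp (t / 2) := by
    rw [hs, Real.sinh_eq]
    have := Real.exp_pos (-(t / 2))
    linarith
  have h3 : (2 * s) ^ (2 * H) ≤ Real.exp (H * t) := by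
    calc (2 * s) ^ (2 * H) ≤ (Real.exp (t / 2)) ^ (2 * H) :=
          Real.rpow_le_rpow hu.le hle (by linarith)
      _ = Real.exp (H * t) := by
          rw [Real.rpow_def_of_pos (Real.exp_pos _), Real.log_exp]
          ring_nf
  have h4 : Real.exp (H * t) ≤ 2 * Real.cosh (H * t) := by
    rw [Real.cosh_eq]
    have := Real.exp_pos (-(H * t))
    linarith
  have hcsq : c ^ 2 = 1 + s ^ 2 := by
    rw [hc, hs]
    have := Real.cosh_sq (t / 2)
    linarith
  -- rewrite goal
  rw [hE1, hE1']
  have hkey : X * (2 * s) ^ (2 : ℕ) ≤ 2 * Real.cosh (H * t) := by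
    have : X * (2 * s) ^ (2 : ℝ) ≤ 2 * Real.cosh (H * t) := by
      rw [← hE2]; linarith
    rwa [hsq] at this
  nlinarith [mul_pos hXpos hs0, mul_nonneg hXpos.le (sq_nonneg s),
    mul_le_mul_of_nonneg_left hkey (mul_pos hH0 hH0).le,
    mul_nonneg (mul_nonneg hXpos.le (by linarith : (0:ℝ) ≤ 1 - 2 * H)) hH0.le]

/-- For every `H` with `0 < H ≤ 1/2`, the function
`t ↦ cosh(Ht) − (1/2)(2 sinh(t/2))^{2H}` is convex on `(0, ∞)`. -/
theorem stmt_6 (H : ℝ) (hH0 : 0 < H) (hH : H ≤ 1 / 2) :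
    ConvexOn ℝ (Set.Ioi (0 : ℝ))
      (fun t : ℝ => Real.cosh (H * t) - (1 / 2) * (2 * Real.sinh (t / 2)) ^ (2 * H)) := by
  set f : ℝ → ℝ :=
    fun t : ℝ => Real.cosh (H * t) - (1 / 2) * (2 * Real.sinh (t / 2)) ^ (2 * H) with hf
  set f1 : ℝ → ℝ := fun t => Real.sinh (H * t) * H -
        (1 / 2) * (Real.cosh (t / 2) * (2 * H) * (2 * Real.sinh (t / 2)) ^ (2 * H - 1)) with hf1
  set f2 : ℝ → ℝ := fun t => Real.cosh (H * t) * H * H -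
        (1 / 2) * ((Real.sinh (t / 2) * (1 / 2) * (2 * H)) * (2 * Real.sinh (t / 2)) ^ (2 * H - 1)
          + (Real.cosh (t / 2) * (2 * H)) *
            (Real.cosh (t / 2) * (2 * H - 1) * (2 * Real.sinh (t / 2)) ^ (2 * H - 1 - 1))) with hf2
  have hd1 : ∀ x ∈ Set.Ioi (0 : ℝ), HasDerivAt f (f1 x) x := fun x hx => aux_hd1 H hx
  have hderiv2 : ∀ x ∈ Set.Ioi (0 : ℝ), HasDerivAt (deriv f) (f2 x) x := by
    intro x hx
    refine (aux_hd2 H hx).congr_of_eventuallyEq ?_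
    filter_upwards [Ioi_mem_nhds hx] with y hy
    exact (hd1 y hy).deriv
  apply convexOn_of_deriv2_nonneg (convex_Ioi 0)
  · exact fun x hx => ((hd1 x hx).differentiableAt.continuousAt).continuousWithinAt
  · rw [interior_Ioi]
    exact fun x hx => (hd1 x hx).differentiableAt.differentiableWithinAt
  · rw [interior_Ioi]
    exact fun x hx => (hderiv2 x hx).differentiableAt.differentiableWithinAt
  · rw [interior_Ioi]
    intro x hx
    have h2 : deriv^[2] f x = deriv (deriv f) x := by
      simp [Function.iterate_succ_apply']
    rw [h2, (hderiv2 x hx).deriv]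
    exact aux_nonneg H hH0 hH hx
end

section
/- For every H with 0 < H ≤ 1/2 and every real t, one has cosh((2H − 1)t/2)/cosh(t/2) ≤ 1/cosh(Ht). -/
open Real

/-- For every `H` with `0 < H ≤ 1/2` and every real `t`,
`cosh((2H − 1)t/2)/cosh(t/2) ≤ 1/cosh(Ht)`. -/
theorem stmt_7 (H t : ℝ) (hH0 : 0 < H) (hH : H ≤ 1 / 2) :
    Real.cosh ((2 * H - 1) * t / 2) / Real.cosh (t / 2) ≤ 1 / Real.cosh (H * t) := by
  rw [div_le_div_iff₀ (Real.cosh_pos _) (Real.cosh_pos _), one_mul]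
  have key : Real.cosh ((2 * H - 1) * t / 2) * Real.cosh (H * t)
      = (Real.cosh ((4 * H - 1) * t / 2) + Real.cosh (t / 2)) / 2 := by
    have h1 : (4 * H - 1) * t / 2 = (2 * H - 1) * t / 2 + H * t := by ring
    have h2 : (t / 2 : ℝ) = H * t - (2 * H - 1) * t / 2 := by ring
    rw [h1, h2, Real.cosh_add, Real.cosh_sub]
    ring_nf
  rw [key]
  have hmono : Real.cosh ((4 * H - 1) * t / 2) ≤ Real.cosh (t / 2) := by
    rw [Real.cosh_le_cosh]
    rw [abs_div, abs_div, abs_mul]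
    apply div_le_div_of_nonneg_right ?_ (by norm_num)
    calc |4 * H - 1| * |t| ≤ 1 * |t| := by
          apply mul_le_mul_of_nonneg_right _ (abs_nonneg t)
          rw [abs_le]; constructor <;> nlinarith
      _ = |t| := one_mul _
  linarith
end

section
/- Let B(H, t) = cosh((2H − 1)t/2)/cosh(t/2). For every H with 0 < H < 1/2 and every t > 0, one has ∂B/∂H (H, t) − (t/H) · ∂B/∂t (H, t) > 0. Equivalently, with τ = t/2 and h̄ = 1 − 2H, this expression equals (τ sinh(h̄τ)/(H cosh τ)) · (tanh(τ)/tanh(h̄τ) − 1), which is strictly positive. -/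
open Real

/-- Let `B(H,t) = cosh((2H−1)t/2)/cosh(t/2)`. For `0 < H < 1/2` and `t > 0`,
`∂B/∂H (H,t) − (t/H) ∂B/∂t (H,t)` equals
`(τ sinh(h̄τ)/(H cosh τ)) (tanh τ / tanh(h̄τ) − 1)` with `τ = t/2`, `h̄ = 1 − 2H`,
and this quantity is strictly positive. -/
theorem stmt_8 (H t : ℝ) (hH0 : 0 < H) (hH : H < 1 / 2) (ht : 0 < t) :
    (deriv (fun h : ℝ => Real.cosh ((2 * h - 1) * t / 2) / Real.cosh (t / 2)) H
      - (t / H) * deriv (fun s : ℝ => Real.cosh ((2 * H - 1) * s / 2) / Real.cosh (s / 2)) t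
      = ((t / 2) * Real.sinh ((1 - 2 * H) * (t / 2)) / (H * Real.cosh (t / 2))) *
          (Real.tanh (t / 2) / Real.tanh ((1 - 2 * H) * (t / 2)) - 1)) ∧
    0 < deriv (fun h : ℝ => Real.cosh ((2 * h - 1) * t / 2) / Real.cosh (t / 2)) H
      - (t / H) * deriv (fun s : ℝ => Real.cosh ((2 * H - 1) * s / 2) / Real.cosh (s / 2)) t := by
  have hct : Real.cosh (t / 2) ≠ 0 := (Real.cosh_pos _).ne'
  -- derivative in H
  have h1 : HasDerivAt (fun h : ℝ => (2 * h - 1) * t / 2) t H := by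
    have := (((hasDerivAt_id H).const_mul 2).sub_const 1).mul_const t |>.div_const 2
    exact this.congr_deriv (by ring)
  have dH : deriv (fun h : ℝ => Real.cosh ((2 * h - 1) * t / 2) / Real.cosh (t / 2)) H
      = Real.sinh ((2 * H - 1) * t / 2) * t / Real.cosh (t / 2) := by
    have := (h1.cosh.div_const (Real.cosh (t / 2))).deriv
    simpa using this
  -- derivative in t
  have h2 : HasDerivAt (fun s : ℝ => (2 * H - 1) * s / 2) ((2 * H - 1) / 2) t := by
    have := ((hasDerivAt_id t).const_mul (2 * H - 1)).div_const 2
    exact this.congr_deriv (by ring)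
  have h3 : HasDerivAt (fun s : ℝ => s / 2) (1 / 2) t := by
    simpa using (hasDerivAt_id t).div_const 2
  have dt : deriv (fun s : ℝ => Real.cosh ((2 * H - 1) * s / 2) / Real.cosh (s / 2)) t
      = (Real.sinh ((2 * H - 1) * t / 2) * ((2 * H - 1) / 2) * Real.cosh (t / 2)
          - Real.cosh ((2 * H - 1) * t / 2) * (Real.sinh (t / 2) * (1 / 2)))
          / Real.cosh (t / 2) ^ 2 := by
    have := (h2.cosh.div h3.cosh hct).deriv
    exact this
  -- rewrite argument
  have harg : (2 * H - 1) * t / 2 = -((1 - 2 * H) * (t / 2)) := by ring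
  set a := (1 - 2 * H) * (t / 2) with ha
  have ha0 : 0 < a := by
    apply mul_pos <;> nlinarith
  have hat : a < t / 2 := by nlinarith
  have hca : Real.cosh a ≠ 0 := (Real.cosh_pos _).ne'
  have hsa : 0 < Real.sinh a := Real.sinh_pos_iff.2 ha0
  have hst : 0 < Real.sinh (t / 2) := Real.sinh_pos_iff.2 (by linarith)
  have keyeq : deriv (fun h : ℝ => Real.cosh ((2 * h - 1) * t / 2) / Real.cosh (t / 2)) H
      - (t / H) * deriv (fun s : ℝ => Real.cosh ((2 * H - 1) * s / 2) / Real.cosh (s / 2)) t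
      = ((t / 2) * Real.sinh a / (H * Real.cosh (t / 2))) *
          (Real.tanh (t / 2) / Real.tanh a - 1) := by
    rw [dH, dt, harg, Real.sinh_neg, Real.cosh_neg, Real.tanh_eq_sinh_div_cosh,
      Real.tanh_eq_sinh_div_cosh]
    field_simp
    ring
  refine ⟨keyeq, ?_⟩
  rw [keyeq]
  apply mul_pos
  · positivity
  · have hta : 0 < Real.tanh a := by
      rw [Real.tanh_eq_sinh_div_cosh]; positivity
    have hsub : Real.sinh (a - t / 2) < 0 := Real.sinh_neg_iff.2 (by linarith)
    rw [Real.sinh_sub] at hsub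
    have hlt : Real.tanh a < Real.tanh (t / 2) := by
      rw [Real.tanh_eq_sinh_div_cosh, Real.tanh_eq_sinh_div_cosh,
        div_lt_div_iff₀ (Real.cosh_pos _) (Real.cosh_pos _)]
      nlinarith
    have : 1 < Real.tanh (t / 2) / Real.tanh a := (one_lt_div hta).2 hlt
    linarith
end

section
/- For α > 1 and 0 < H < 1, set κ = α + H − 1 and define f_{α,H}(λ) = sin(πH) Γ(κ+H) Γ(κ+1−H) κ cosh(πλ) / ((sinh²(πλ) + sin²(πH)) · |Γ(iλ + κ + 1)|²), where Γ is the complex Gamma function (real Gamma on positive reals). Then for every fixed α > 1 and every fixed real λ, lim_{H → 0+} H · f_{α,H}(λH) = 1/(π(1 + λ²)). -/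
open Real Complex Filter

private lemma slope_lim (c : ℝ) :
    Tendsto (fun H : ℝ => Real.sin (c * H) / H) (nhdsWithin 0 (Set.Ioi 0)) (nhds c) := by
  have hd : HasDerivAt (fun H : ℝ => Real.sin (c * H)) c 0 := by
    have := (Real.hasDerivAt_sin (c * 0)).comp 0 ((hasDerivAt_id (0:ℝ)).const_mul c)
    simpa [Function.comp_def] using this
  have h := hasDerivAt_iff_tendsto_slope.mp hd
  have h2 : Tendsto (slope (fun H : ℝ => Real.sin (c * H)) 0)
      (nhdsWithin 0 (Set.Ioi 0)) (nhds c) :=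
    h.mono_left (nhdsWithin_mono _ (fun x hx => ne_of_gt hx))
  refine h2.congr (fun x => ?_)
  simp [slope_def_field, div_eq_mul_inv, mul_comm]

private lemma slope_lim_sinh (c : ℝ) :
    Tendsto (fun H : ℝ => Real.sinh (c * H) / H) (nhdsWithin 0 (Set.Ioi 0)) (nhds c) := by
  have hd : HasDerivAt (fun H : ℝ => Real.sinh (c * H)) c 0 := by
    have := (Real.hasDerivAt_sinh (c * 0)).comp 0 ((hasDerivAt_id (0:ℝ)).const_mul c)
    simpa [Function.comp_def] using this
  have h := hasDerivAt_iff_tendsto_slope.mp hd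
  have h2 : Tendsto (slope (fun H : ℝ => Real.sinh (c * H)) 0)
      (nhdsWithin 0 (Set.Ioi 0)) (nhds c) :=
    h.mono_left (nhdsWithin_mono _ (fun x hx => ne_of_gt hx))
  refine h2.congr (fun x => ?_)
  simp [slope_def_field, div_eq_mul_inv, mul_comm]

private lemma alg (H s g1 g2 k c B sh : ℝ) (hH : H ≠ 0) :
    H * (s * g1 * g2 * k * c / ((sh ^ 2 + s ^ 2) * B)) =
    s / H * (g1 * g2 * k * c) / (((sh / H) ^ 2 + (s / H) ^ 2) * B) := by
  rcases eq_or_ne ((sh ^ 2 + s ^ 2) * B) 0 with h | h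
  · rw [div_pow, div_pow, ← add_div,
      show (sh ^ 2 + s ^ 2) / H ^ 2 * B = (sh ^ 2 + s ^ 2) * B / H ^ 2 by ring, h]
    simp
  · rcases mul_ne_zero_iff.mp h with ⟨h1, h2⟩
    field_simp

/-- With `κ = α + H − 1` and
`f_{α,H}(λ) = sin(πH) Γ(κ+H) Γ(κ+1−H) κ cosh(πλ) / ((sinh²(πλ)+sin²(πH)) |Γ(iλ+κ+1)|²)`,
for every fixed `α > 1` and fixed real `λ` one has
`lim_{H → 0+} H · f_{α,H}(λH) = 1/(π(1+λ²))`. -/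
theorem stmt_10 (α l : ℝ) (hα : 1 < α) :
    Filter.Tendsto (fun H : ℝ =>
        H * (Real.sin (π * H) * Real.Gamma ((α + H - 1) + H) *
          Real.Gamma ((α + H - 1) + 1 - H) * (α + H - 1) * Real.cosh (π * (l * H)) /
          ((Real.sinh (π * (l * H)) ^ 2 + Real.sin (π * H) ^ 2) *
            (‖Complex.Gamma
              (Complex.I * ((l * H : ℝ) : ℂ) + ((α + H - 1 : ℝ) : ℂ) + 1)‖) ^ 2)))
      (nhdsWithin 0 (Set.Ioi 0)) (nhds (1 / (π * (1 + l ^ 2)))) := by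
  have hπ : (0:ℝ) < π := Real.pi_pos
  have hΓα : 0 < Real.Gamma α := Real.Gamma_pos_of_pos (by linarith)
  have hΓα1 : 0 < Real.Gamma (α - 1) := Real.Gamma_pos_of_pos (by linarith)
  -- limits of the pieces
  have hsin : Tendsto (fun H : ℝ => Real.sin (π * H) / H)
      (nhdsWithin 0 (Set.Ioi 0)) (nhds π) := slope_lim π
  have hsinh : Tendsto (fun H : ℝ => Real.sinh (π * (l * H)) / H)
      (nhdsWithin 0 (Set.Ioi 0)) (nhds (π * l)) := by
    have := slope_lim_sinh (π * l)
    refine this.congr (fun x => ?_)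
    ring_nf
  -- Gamma factors by continuity
  have hG1 : Tendsto (fun H : ℝ => Real.Gamma ((α + H - 1) + H))
      (nhdsWithin 0 (Set.Ioi 0)) (nhds (Real.Gamma (α - 1))) := by
    have hc : ContinuousAt Real.Gamma (α - 1) := by
      refine (Real.differentiableAt_Gamma (fun n => ?_)).continuousAt
      have hn : (0:ℝ) ≤ (n:ℝ) := n.cast_nonneg
      intro h
      have hpos : (0:ℝ) < α - 1 := by linarith
      rw [h] at hpos
      linarith
    have hinner : Tendsto (fun H : ℝ => (α + H - 1) + H) (nhdsWithin 0 (Set.Ioi 0))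
        (nhds (α - 1)) := by
      have : Continuous (fun H : ℝ => (α + H - 1) + H) := by continuity
      have := (this.tendsto 0).mono_left (nhdsWithin_le_nhds (s := Set.Ioi (0:ℝ)))
      simpa using this
    exact hc.tendsto.comp hinner
  have hG2 : Tendsto (fun H : ℝ => Real.Gamma ((α + H - 1) + 1 - H))
      (nhdsWithin 0 (Set.Ioi 0)) (nhds (Real.Gamma α)) := by
    have : (fun H : ℝ => Real.Gamma ((α + H - 1) + 1 - H)) = fun _ => Real.Gamma α := by
      funext H; ring_nf
    rw [this]; exact tendsto_const_nhds
  have hκ : Tendsto (fun H : ℝ => α + H - 1) (nhdsWithin 0 (Set.Ioi 0)) (nhds (α - 1)) := by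
    have : Continuous (fun H : ℝ => α + H - 1) := by continuity
    have := (this.tendsto 0).mono_left (nhdsWithin_le_nhds (s := Set.Ioi (0:ℝ)))
    simpa using this
  have hcosh : Tendsto (fun H : ℝ => Real.cosh (π * (l * H))) (nhdsWithin 0 (Set.Ioi 0))
      (nhds 1) := by
    have : Continuous (fun H : ℝ => Real.cosh (π * (l * H))) := by continuity
    have := (this.tendsto 0).mono_left (nhdsWithin_le_nhds (s := Set.Ioi (0:ℝ)))
    simpa using this
  have hCG : Tendsto (fun H : ℝ => (‖Complex.Gamma
      (Complex.I * ((l * H : ℝ) : ℂ) + ((α + H - 1 : ℝ) : ℂ) + 1)‖) ^ 2)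
      (nhdsWithin 0 (Set.Ioi 0)) (nhds ((Real.Gamma α) ^ 2)) := by
    have hcΓ : ContinuousAt Complex.Gamma ((α : ℂ)) := by
      refine (Complex.differentiableAt_Gamma _ (fun n => ?_)).continuousAt
      intro h
      have : α = -(n:ℝ) := by exact_mod_cast h
      have : (0:ℝ) ≤ (n:ℝ) := n.cast_nonneg
      linarith [show α = -(n:ℝ) by exact_mod_cast h]
    have hinner : Tendsto (fun H : ℝ =>
        Complex.I * ((l * H : ℝ) : ℂ) + ((α + H - 1 : ℝ) : ℂ) + 1)
        (nhdsWithin 0 (Set.Ioi 0)) (nhds ((α : ℂ))) := by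
      have hc : Continuous (fun H : ℝ =>
          Complex.I * ((l * H : ℝ) : ℂ) + ((α + H - 1 : ℝ) : ℂ) + 1) := by continuity
      have := (hc.tendsto 0).mono_left (nhdsWithin_le_nhds (s := Set.Ioi (0:ℝ)))
      simp only [mul_zero, Complex.ofReal_zero] at this
      convert this using 2
      push_cast; ring
    have := ((continuous_norm.continuousAt.comp hcΓ).tendsto.comp hinner).pow 2
    convert this using 2
    simp only [Function.comp_apply, Complex.Gamma_ofReal]
    change _ = ‖Complex.Gamma (α:ℂ)‖ ^ 2
    rw [Complex.Gamma_ofReal, Complex.norm_real, Real.norm_eq_abs, abs_of_pos hΓα]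
  -- the rewritten function and its limit
  have hden_ne : ((π * l) ^ 2 + π ^ 2) * (Real.Gamma α) ^ 2 ≠ 0 := by positivity
  have key : Tendsto (fun H : ℝ =>
      (Real.sin (π * H) / H) * (Real.Gamma ((α + H - 1) + H) *
        Real.Gamma ((α + H - 1) + 1 - H) * (α + H - 1) * Real.cosh (π * (l * H))) /
      (((Real.sinh (π * (l * H)) / H) ^ 2 + (Real.sin (π * H) / H) ^ 2) *
        (‖Complex.Gamma
          (Complex.I * ((l * H : ℝ) : ℂ) + ((α + H - 1 : ℝ) : ℂ) + 1)‖) ^ 2))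
      (nhdsWithin 0 (Set.Ioi 0))
      (nhds (π * (Real.Gamma (α - 1) * Real.Gamma α * (α - 1) * 1) /
        (((π * l) ^ 2 + π ^ 2) * (Real.Gamma α) ^ 2))) := by
    exact (hsin.mul (((hG1.mul hG2).mul hκ).mul hcosh)).div
      (((hsinh.pow 2).add (hsin.pow 2)).mul hCG) hden_ne
  have hval : π * (Real.Gamma (α - 1) * Real.Gamma α * (α - 1) * 1) /
      (((π * l) ^ 2 + π ^ 2) * (Real.Gamma α) ^ 2) = 1 / (π * (1 + l ^ 2)) := by
    have ha : α - 1 ≠ 0 := by intro h; apply absurd h; linarith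
    have hΓrec : Real.Gamma α = (α - 1) * Real.Gamma (α - 1) := by
      have := Real.Gamma_add_one ha
      rw [show α - 1 + 1 = α by ring] at this
      exact this
    have hs : (π * l) ^ 2 + π ^ 2 ≠ 0 := by positivity
    rw [hΓrec]
    field_simp
    ring
  rw [← hval]
  refine key.congr' ?_
  filter_upwards [self_mem_nhdsWithin] with H hH
  exact (alg H _ _ _ _ _ _ _ (ne_of_gt hH)).symm
end

section
/- For every κ > 0 and every H with 0 < H < 1, the function λ ↦ cosh(πλ) / ((sinh²(πλ) + sin²(πH)) · |Γ(iλ + κ + 1)|²) is nonincreasing on [0, ∞), where Γ is the complex Gamma function. -/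
open Real Complex Filter Finset Nat Topology

private lemma key_ineq {a b x y : ℝ} (hb : 0 ≤ b) (hba : b ≤ a) (hx : 0 ≤ x) (hxy : x ≤ y) :
    (a ^ 2 + y ^ 2) * (b ^ 2 + x ^ 2) ≤ (a ^ 2 + x ^ 2) * (b ^ 2 + y ^ 2) := by
  nlinarith [mul_nonneg (sub_nonneg.2 (by nlinarith : b ^ 2 ≤ a ^ 2))
    (sub_nonneg.2 (by nlinarith : x ^ 2 ≤ y ^ 2))]

private lemma term_mono {H κ : ℝ} (hH0 : 0 < H) (hH1 : H < 1) (hκ : 0 < κ)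
    {j x y : ℝ} (hj : 0 ≤ j) (hx : 0 ≤ x) (hxy : x ≤ y) :
    ((1/2 + j) ^ 2 + y ^ 2) * ((κ + 1 + j) ^ 2 + y ^ 2) *
        (((H + j) ^ 2 + x ^ 2) * ((1 - H + j) ^ 2 + x ^ 2)) ≤
      ((1/2 + j) ^ 2 + x ^ 2) * ((κ + 1 + j) ^ 2 + x ^ 2) *
        (((H + j) ^ 2 + y ^ 2) * ((1 - H + j) ^ 2 + y ^ 2)) := by
  rcases le_total H (1/2) with h | h
  · have k1 := key_ineq (a := 1/2 + j) (b := H + j) (by linarith) (by linarith) hx hxy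
    have k2 := key_ineq (a := κ + 1 + j) (b := 1 - H + j) (by linarith) (by linarith) hx hxy
    calc ((1/2 + j) ^ 2 + y ^ 2) * ((κ + 1 + j) ^ 2 + y ^ 2) *
          (((H + j) ^ 2 + x ^ 2) * ((1 - H + j) ^ 2 + x ^ 2))
        = (((1/2 + j) ^ 2 + y ^ 2) * ((H + j) ^ 2 + x ^ 2)) *
          (((κ + 1 + j) ^ 2 + y ^ 2) * ((1 - H + j) ^ 2 + x ^ 2)) := by ring
      _ ≤ (((1/2 + j) ^ 2 + x ^ 2) * ((H + j) ^ 2 + y ^ 2)) *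
          (((κ + 1 + j) ^ 2 + x ^ 2) * ((1 - H + j) ^ 2 + y ^ 2)) :=
        mul_le_mul k1 k2 (by positivity) (by positivity)
      _ = _ := by ring
  · have k1 := key_ineq (a := 1/2 + j) (b := 1 - H + j) (by linarith) (by linarith) hx hxy
    have k2 := key_ineq (a := κ + 1 + j) (b := H + j) (by linarith) (by linarith) hx hxy
    calc ((1/2 + j) ^ 2 + y ^ 2) * ((κ + 1 + j) ^ 2 + y ^ 2) *
          (((H + j) ^ 2 + x ^ 2) * ((1 - H + j) ^ 2 + x ^ 2))
        = (((1/2 + j) ^ 2 + y ^ 2) * ((1 - H + j) ^ 2 + x ^ 2)) *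
          (((κ + 1 + j) ^ 2 + y ^ 2) * ((H + j) ^ 2 + x ^ 2)) := by ring
      _ ≤ (((1/2 + j) ^ 2 + x ^ 2) * ((1 - H + j) ^ 2 + y ^ 2)) *
          (((κ + 1 + j) ^ 2 + x ^ 2) * ((H + j) ^ 2 + y ^ 2)) :=
        mul_le_mul k1 k2 (by positivity) (by positivity)
      _ = _ := by ring

private lemma abs_sin_sq (a b : ℝ) :
    (‖Complex.sin (↑a + ↑b * I)‖) ^ 2 = Real.sin a ^ 2 + Real.sinh b ^ 2 := by
  rw [Complex.sin_add_mul_I, ← Complex.ofReal_sin, ← Complex.ofReal_cosh, ← Complex.ofReal_cos,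
    ← Complex.ofReal_sinh, ← Complex.ofReal_mul, ← Complex.ofReal_mul, Complex.sq_norm,
    Complex.normSq_add_mul_I]
  nlinarith [Real.sin_sq_add_cos_sq a, Real.cosh_sq b]

private lemma abs_gamma_mul (a b : ℝ) :
    ‖Complex.Gamma (↑a + ↑b * I)‖ * ‖Complex.Gamma (↑(1 - a) + ↑b * I)‖ =
      π / ‖Complex.sin (↑π * (↑a + ↑b * I))‖ := by
  have h1 : (1 : ℂ) - (↑a + ↑b * I) = (starRingEnd ℂ) (↑(1 - a) + ↑b * I) := by
    simp [Complex.ext_iff]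
  have h2 : ‖Complex.Gamma (↑(1 - a) + ↑b * I)‖ =
      ‖Complex.Gamma ((1 : ℂ) - (↑a + ↑b * I))‖ := by
    rw [h1, Complex.Gamma_conj, Complex.norm_conj]
  rw [h2, ← norm_mul, Complex.Gamma_mul_Gamma_one_sub, norm_div, Complex.norm_real, Real.norm_eq_abs,
    abs_of_pos Real.pi_pos]

private lemma absGS {x : ℝ} (hx : 0 < x) (l : ℝ) {n : ℕ} (hn : 1 ≤ n) :
    (‖Complex.GammaSeq (↑x + ↑l * I) n‖) ^ 2 =
      ((n : ℝ) ^ x) ^ 2 * ((n ! : ℝ)) ^ 2 /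
        ∏ j ∈ Finset.range (n + 1), ((x + j) ^ 2 + l ^ 2) := by
  have hn0 : (0 : ℝ) < n := by exact_mod_cast hn
  rw [Complex.GammaSeq, norm_div, norm_mul, norm_prod]
  rw [show ((n : ℂ)) = ((n : ℝ) : ℂ) by push_cast; ring,
    Complex.norm_cpow_eq_rpow_re_of_pos hn0]
  have hre : (↑x + ↑l * I).re = x := by simp
  rw [hre, Complex.norm_natCast, div_pow, mul_pow, ← Finset.prod_pow]
  congr 1
  refine Finset.prod_congr rfl fun j _ => ?_
  rw [Complex.sq_norm, Complex.normSq_apply]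
  simp
  ring

private lemma abs_gamma_pos {t : ℝ} (ht : 0 < t) (l : ℝ) :
    0 < ‖Complex.Gamma (↑t + ↑l * I)‖ := by
  refine norm_pos_iff.mpr (Complex.Gamma_ne_zero_of_re_pos ?_)
  simpa using ht

private lemma gseq_mono {H κ : ℝ} (hH0 : 0 < H) (hH1 : H < 1) (hκ : 0 < κ)
    {x y : ℝ} (hx : 0 ≤ x) (hxy : x ≤ y) {n : ℕ} (hn : 1 ≤ n) :
    (‖Complex.GammaSeq (↑H + ↑y * I) n‖ *
          ‖Complex.GammaSeq (↑(1 - H) + ↑y * I) n‖) ^ 2 /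
        (π * (‖Complex.GammaSeq (↑((1:ℝ)/2) + ↑y * I) n‖) ^ 2 *
          (‖Complex.GammaSeq (↑(κ + 1) + ↑y * I) n‖) ^ 2) ≤
      (‖Complex.GammaSeq (↑H + ↑x * I) n‖ *
          ‖Complex.GammaSeq (↑(1 - H) + ↑x * I) n‖) ^ 2 /
        (π * (‖Complex.GammaSeq (↑((1:ℝ)/2) + ↑x * I) n‖) ^ 2 *
          (‖Complex.GammaSeq (↑(κ + 1) + ↑x * I) n‖) ^ 2) := by
  have h2 : (0:ℝ) < 1/2 := by norm_num
  have h1H : 0 < 1 - H := by linarith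
  have hκ1 : 0 < κ + 1 := by linarith
  have hn0 : (0:ℝ) < n := by exact_mod_cast hn
  have hP : ∀ t l : ℝ, 0 < t → 0 < ∏ j ∈ Finset.range (n + 1), ((t + j) ^ 2 + l ^ 2) := by
    intro t l ht
    refine Finset.prod_pos fun j _ => ?_
    have h : (0:ℝ) < t + j := by positivity
    positivity
  have hgl : ∀ l : ℝ,
      (‖Complex.GammaSeq (↑H + ↑l * I) n‖ *
            ‖Complex.GammaSeq (↑(1 - H) + ↑l * I) n‖) ^ 2 /
          (π * (‖Complex.GammaSeq (↑((1:ℝ)/2) + ↑l * I) n‖) ^ 2 *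
            (‖Complex.GammaSeq (↑(κ + 1) + ↑l * I) n‖) ^ 2)
        = (((n:ℝ) ^ H) ^ 2 * ((n:ℝ) ^ (1 - H)) ^ 2 /
            (π * ((n:ℝ) ^ ((1:ℝ)/2)) ^ 2 * ((n:ℝ) ^ (κ + 1)) ^ 2)) *
          ((∏ j ∈ Finset.range (n + 1), (((1:ℝ)/2 + j) ^ 2 + l ^ 2)) *
              (∏ j ∈ Finset.range (n + 1), ((κ + 1 + j) ^ 2 + l ^ 2)) /
            ((∏ j ∈ Finset.range (n + 1), ((H + j) ^ 2 + l ^ 2)) *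
              (∏ j ∈ Finset.range (n + 1), ((1 - H + j) ^ 2 + l ^ 2)))) := by
    intro l
    rw [mul_pow, absGS hH0 l hn, absGS h1H l hn, absGS h2 l hn, absGS hκ1 l hn]
    have f1 := (hP H l hH0).ne'
    have f2 := (hP (1 - H) l h1H).ne'
    have f3 := (hP (1/2) l h2).ne'
    have f4 := (hP (κ + 1) l hκ1).ne'
    have hfac : ((n ! : ℝ)) ≠ 0 := by positivity
    have hr1 : ((n:ℝ) ^ H) ≠ 0 := (Real.rpow_pos_of_pos hn0 _).ne'
    have hr2 : ((n:ℝ) ^ (1 - H)) ≠ 0 := (Real.rpow_pos_of_pos hn0 _).ne'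
    have hr3 : ((n:ℝ) ^ ((1:ℝ)/2)) ≠ 0 := (Real.rpow_pos_of_pos hn0 _).ne'
    have hr4 : ((n:ℝ) ^ (κ + 1)) ≠ 0 := (Real.rpow_pos_of_pos hn0 _).ne'
    have hπ : (π : ℝ) ≠ 0 := Real.pi_ne_zero
    field_simp
  rw [hgl x, hgl y]
  refine mul_le_mul_of_nonneg_left ?_ (by positivity)
  rw [div_le_div_iff₀ (mul_pos (hP _ _ hH0) (hP _ _ h1H)) (mul_pos (hP _ _ hH0) (hP _ _ h1H))]
  simp only [← Finset.prod_mul_distrib]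
  refine Finset.prod_le_prod (fun j _ => by positivity) (fun j _ => ?_)
  exact term_mono hH0 hH1 hκ (Nat.cast_nonneg j) hx hxy

private lemma f_eq {κ H : ℝ} (hκ : 0 < κ) (hH0 : 0 < H) (hH1 : H < 1) (l : ℝ) :
    Real.cosh (π * l) /
        ((Real.sinh (π * l) ^ 2 + Real.sin (π * H) ^ 2) *
          (‖Complex.Gamma (Complex.I * (l : ℂ) + (κ : ℂ) + 1)‖) ^ 2)
      = (‖Complex.Gamma (↑H + ↑l * I)‖ *
            ‖Complex.Gamma (↑(1 - H) + ↑l * I)‖) ^ 2 /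
          (π * (‖Complex.Gamma (↑((1:ℝ)/2) + ↑l * I)‖) ^ 2 *
            (‖Complex.Gamma (↑(κ + 1) + ↑l * I)‖) ^ 2) := by
  have hπ := Real.pi_pos
  have hG4 : Complex.Gamma (Complex.I * (l : ℂ) + (κ : ℂ) + 1) =
      Complex.Gamma (↑(κ + 1) + ↑l * I) := by
    congr 1; push_cast; ring
  have g1 := abs_gamma_pos hH0 l
  have g2 := abs_gamma_pos (show 0 < 1 - H by linarith) l
  have g3 := abs_gamma_pos (show (0:ℝ) < 1/2 by norm_num) l
  have g4 := abs_gamma_pos (show 0 < κ + 1 by linarith) l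
  have hs2 : (‖Complex.sin (↑π * (↑H + ↑l * I))‖) ^ 2
      = Real.sin (π * H) ^ 2 + Real.sinh (π * l) ^ 2 := by
    rw [show (↑π * (↑H + ↑l * I) : ℂ) = ↑(π * H) + ↑(π * l) * I by push_cast; ring, abs_sin_sq]
  have hspos : (0:ℝ) < Real.sin (π * H) ^ 2 + Real.sinh (π * l) ^ 2 := by
    have h : 0 < Real.sin (π * H) := Real.sin_pos_of_pos_of_lt_pi (by positivity) (by nlinarith)
    positivity
  have hsne : ‖Complex.sin (↑π * (↑H + ↑l * I))‖ ≠ 0 := by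
    have h' : 0 < (‖Complex.sin (↑π * (↑H + ↑l * I))‖) ^ 2 := hs2 ▸ hspos
    intro h0; rw [h0] at h'; simp at h'
  have hS : (‖Complex.Gamma (↑H + ↑l * I)‖ *
      ‖Complex.Gamma (↑(1 - H) + ↑l * I)‖) ^ 2 *
      (Real.sin (π * H) ^ 2 + Real.sinh (π * l) ^ 2) = π ^ 2 := by
    rw [abs_gamma_mul, div_pow, ← hs2]
    field_simp
  have ht2 : (‖Complex.sin (↑π * (↑((1:ℝ)/2) + ↑l * I))‖) ^ 2
      = Real.cosh (π * l) ^ 2 := by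
    rw [show (↑π * (↑((1:ℝ)/2) + ↑l * I) : ℂ) = ↑(π * ((1:ℝ)/2)) + ↑(π * l) * I by
        push_cast; ring, abs_sin_sq, show π * ((1:ℝ)/2) = π/2 by ring, Real.sin_pi_div_two,
      Real.cosh_sq]
    ring
  have hT' : ‖Complex.sin (↑π * (↑((1:ℝ)/2) + ↑l * I))‖ = Real.cosh (π * l) :=
    (sq_eq_sq₀ (norm_nonneg _) (Real.cosh_pos _).le).mp ht2
  have hg := abs_gamma_mul ((1:ℝ)/2) l
  rw [hT', show (1 - (1:ℝ)/2) = (1:ℝ)/2 by norm_num] at hg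
  have hc := (Real.cosh_pos (π * l)).ne'
  rw [eq_div_iff hc] at hg
  have hT : (‖Complex.Gamma (↑((1:ℝ)/2) + ↑l * I)‖) ^ 2 * Real.cosh (π * l) = π := by
    rw [sq]; exact hg
  rw [hG4]
  rw [show Real.sinh (π * l) ^ 2 + Real.sin (π * H) ^ 2
      = π ^ 2 / (‖Complex.Gamma (↑H + ↑l * I)‖ *
          ‖Complex.Gamma (↑(1 - H) + ↑l * I)‖) ^ 2 by
        rw [eq_div_iff (pow_ne_zero _ (mul_pos g1 g2).ne')]; linear_combination hS,
    show Real.cosh (π * l) = π / (‖Complex.Gamma (↑((1:ℝ)/2) + ↑l * I)‖) ^ 2 by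
        rw [eq_div_iff (pow_ne_zero _ g3.ne')]; linear_combination hT]
  have final : ∀ a b c : ℝ, 0 < a → 0 < b → 0 < c →
      (π / a) / ((π ^ 2 / b) * c) = b / (π * a * c) := by
    intro a b c ha hb hc0
    have hπ2 : (π : ℝ) ≠ 0 := Real.pi_ne_zero
    field_simp
  exact final _ _ _ (pow_pos g3 2) (pow_pos (mul_pos g1 g2) 2) (pow_pos g4 2)

/-- For every `κ > 0` and every `H` with `0 < H < 1`, the function
`λ ↦ cosh(πλ) / ((sinh²(πλ) + sin²(πH)) |Γ(iλ + κ + 1)|²)` is nonincreasing on `[0, ∞)`. -/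
theorem stmt_12 (κ H : ℝ) (hκ : 0 < κ) (hH0 : 0 < H) (hH1 : H < 1) :
    AntitoneOn (fun l : ℝ =>
        Real.cosh (π * l) /
          ((Real.sinh (π * l) ^ 2 + Real.sin (π * H) ^ 2) *
            (‖Complex.Gamma (Complex.I * (l : ℂ) + (κ : ℂ) + 1)‖) ^ 2))
      (Set.Ici (0 : ℝ)) := by
  intro x hx y hy hxy
  simp only [Set.mem_Ici] at hx hy
  dsimp only
  rw [f_eq hκ hH0 hH1 x, f_eq hκ hH0 hH1 y]
  have habs : ∀ s : ℂ, Tendsto (fun n => ‖Complex.GammaSeq s n‖) atTop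
      (𝓝 (‖Complex.Gamma s‖)) :=
    fun s => (continuous_norm.tendsto _).comp (Complex.GammaSeq_tendsto_Gamma s)
  have key : ∀ l : ℝ, Tendsto (fun nn : ℕ =>
      (‖Complex.GammaSeq (↑H + ↑l * I) nn‖ *
          ‖Complex.GammaSeq (↑(1 - H) + ↑l * I) nn‖) ^ 2 /
        (π * (‖Complex.GammaSeq (↑((1:ℝ)/2) + ↑l * I) nn‖) ^ 2 *
          (‖Complex.GammaSeq (↑(κ + 1) + ↑l * I) nn‖) ^ 2)) atTop
      (𝓝 ((‖Complex.Gamma (↑H + ↑l * I)‖ *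
            ‖Complex.Gamma (↑(1 - H) + ↑l * I)‖) ^ 2 /
          (π * (‖Complex.Gamma (↑((1:ℝ)/2) + ↑l * I)‖) ^ 2 *
            (‖Complex.Gamma (↑(κ + 1) + ↑l * I)‖) ^ 2))) := by
    intro l
    have g3 := abs_gamma_pos (show (0:ℝ) < 1/2 by norm_num) l
    have g4 := abs_gamma_pos (show 0 < κ + 1 by linarith) l
    exact Filter.Tendsto.div (((habs _).mul (habs _)).pow 2)
      (((tendsto_const_nhds.mul ((habs _).pow 2)).mul ((habs _).pow 2)))
      (ne_of_gt (mul_pos (mul_pos Real.pi_pos (pow_pos g3 2)) (pow_pos g4 2)))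
  refine le_of_tendsto_of_tendsto (key y) (key x) ?_
  filter_upwards [eventually_ge_atTop 1] with n hn
  exact gseq_mono hH0 hH1 hκ hx hxy hn
end

section
/- For every κ with 0 ≤ κ ≤ 1/2, one has Γ(1/2 + κ) · Γ(1 − κ) ≤ √π · 4^κ, where Γ is the real Gamma function. -/
open Real

lemma logGamma_combo (κ : ℝ) (hκ0 : 0 ≤ κ) (hκ : κ ≤ 1 / 2) :
    Real.log (Real.Gamma (1 / 2 + κ)) + Real.log (Real.Gamma (1 - κ)) ≤
      Real.log (Real.sqrt π) := by
  have hcv := Real.convexOn_log_Gamma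
  have hhalf : (1 / 2 : ℝ) ∈ Set.Ioi (0 : ℝ) := by norm_num
  have hone : (1 : ℝ) ∈ Set.Ioi (0 : ℝ) := by norm_num
  have h1 := hcv.2 hhalf hone (by linarith : (0:ℝ) ≤ 1 - 2*κ) (by linarith : (0:ℝ) ≤ 2*κ)
    (by ring)
  have h2 := hcv.2 hhalf hone (by linarith : (0:ℝ) ≤ 2*κ) (by linarith : (0:ℝ) ≤ 1 - 2*κ)
    (by ring)
  have e1 : (1 - 2*κ) • (1/2 : ℝ) + (2*κ) • (1 : ℝ) = 1/2 + κ := by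
    simp [smul_eq_mul]; ring
  have e2 : (2*κ) • (1/2 : ℝ) + (1 - 2*κ) • (1 : ℝ) = 1 - κ := by
    simp [smul_eq_mul]; ring
  rw [e1] at h1
  rw [e2] at h2
  simp only [Function.comp_apply, smul_eq_mul, Real.Gamma_one, Real.log_one,
    Real.Gamma_one_half_eq] at h1 h2
  nlinarith [h1, h2]

/-- For every `κ` with `0 ≤ κ ≤ 1/2`, `Γ(1/2 + κ) Γ(1 − κ) ≤ √π · 4^κ`. -/
theorem stmt_15 (κ : ℝ) (hκ0 : 0 ≤ κ) (hκ : κ ≤ 1 / 2) :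
    Real.Gamma (1 / 2 + κ) * Real.Gamma (1 - κ) ≤ Real.sqrt π * (4 : ℝ) ^ κ := by
  have ha : 0 < Real.Gamma (1 / 2 + κ) := Real.Gamma_pos_of_pos (by linarith)
  have hb : 0 < Real.Gamma (1 - κ) := Real.Gamma_pos_of_pos (by linarith)
  have hs : 0 < Real.sqrt π := Real.sqrt_pos.mpr Real.pi_pos
  have hlog := logGamma_combo κ hκ0 hκ
  rw [← Real.log_mul ha.ne' hb.ne'] at hlog
  have h1 : Real.Gamma (1 / 2 + κ) * Real.Gamma (1 - κ) ≤ Real.sqrt π :=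
    (Real.log_le_log_iff (mul_pos ha hb) hs).mp hlog
  have h2 : (1 : ℝ) ≤ (4 : ℝ) ^ κ := by
    calc (1 : ℝ) = (4 : ℝ) ^ (0 : ℝ) := by simp
    _ ≤ (4 : ℝ) ^ κ := Real.rpow_le_rpow_of_exponent_le (by norm_num) hκ0
  nlinarith
end
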